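/- Let X be a Banach space, J: X × X → ℝ with J(w,·) locally Lipschitz for every w ∈ X, and m_{J1}, m_{J2} ≥ 0. Then the following are equivalent: (i) J₂⁰(w₁,v₁; v₂−v₁) + J₂⁰(w₂,v₂; v₁−v₂) ≤ m_{J1}‖v₁−v₂‖_X² + m_{J2}‖w₁−w₂‖_X‖v₁−v₂‖_X for all w₁,w₂,v₁,v₂ ∈ X; (ii) for all w₁,w₂,v₁,v₂ ∈ X and all ξ₁ ∈ ∂₂J(w₁,v₁), ξ₂ ∈ ∂₂J(w₂,v₂): ⟨ξ₁ − ξ₂, v₁ − v₂⟩ ≥ −m_{J1}‖v₁−v₂‖_X² − m_{J2}‖w₁−w₂‖_X‖v₁−v₂‖_X. -/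

import Mathlib

open Filter MeasureTheory Set

noncomputable def clarkeDeriv {Y : Type*} [NormedAddCommGroup Y] [NormedSpace ℝ Y]
    (φ : Y → ℝ) (y z : Y) : ℝ :=
  Filter.limsup (fun p : Y × ℝ => (φ (p.1 + p.2 • z) - φ p.1) / p.2)
    ((nhds y) ×ˢ (nhdsWithin 0 (Set.Ioi 0)))

def clarkeSubdiff {Y : Type*} [NormedAddCommGroup Y] [NormedSpace ℝ Y]
    (φ : Y → ℝ) (y : Y) : Set (Y →L[ℝ] ℝ) :=
  {ξ | ∀ z, ξ z ≤ clarkeDeriv φ y z}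

section Aux

variable {Y : Type*} [NormedAddCommGroup Y] [NormedSpace ℝ Y]

/-- Existence of a Clarke subgradient attaining the Clarke directional derivative
in a prescribed direction. -/
lemma exists_clarke_subgradient (φ : Y → ℝ) (hφ : LocallyLipschitz φ) (y z₀ : Y) :
    ∃ ξ ∈ clarkeSubdiff φ y, ξ z₀ = clarkeDeriv φ y z₀ := by
  classical
  obtain ⟨K, U, hU, hlip⟩ := hφ y
  set F : Filter (Y × ℝ) := (nhds y) ×ˢ (nhdsWithin (0:ℝ) (Set.Ioi 0)) with hFdef
  haveI hFne : F.NeBot := by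
    rw [hFdef]; infer_instance
  set g : Y → Y × ℝ → ℝ := fun z p => (φ (p.1 + p.2 • z) - φ p.1) / p.2 with hgdef
  have hNdef : ∀ z, clarkeDeriv φ y z = limsup (g z) F := fun z => rfl
  set N : Y → ℝ := fun z => clarkeDeriv φ y z with hN
  -- auxiliary tendsto
  have htend : ∀ z : Y, Tendsto (fun p : Y × ℝ => p.1 + p.2 • z) F (nhds y) := by
    intro z
    have h1 : Tendsto (fun p : Y × ℝ => p.1) F (nhds y) := tendsto_fst
    have h2 : Tendsto (fun p : Y × ℝ => p.2) F (nhds (0:ℝ)) :=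
      tendsto_snd.mono_right nhdsWithin_le_nhds
    have := h1.add (h2.smul_const z)
    simpa using this
  have hsnd : ∀ᶠ p : Y × ℝ in F, p.2 ∈ Set.Ioi (0:ℝ) :=
    tendsto_snd.eventually self_mem_nhdsWithin
  -- the fundamental bound
  have hbound : ∀ z : Y, ∀ᶠ p in F, |g z p| ≤ (K : ℝ) * ‖z‖ := by
    intro z
    filter_upwards [tendsto_fst.eventually hU, (htend z).eventually hU, hsnd]
      with p h1 h2 hp2
    have hp2' : (0:ℝ) < p.2 := hp2
    have hd : dist (φ (p.1 + p.2 • z)) (φ p.1) ≤ (K : ℝ) * dist (p.1 + p.2 • z) p.1 :=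
      hlip.dist_le_mul _ h2 _ h1
    have hdist : dist (p.1 + p.2 • z) p.1 = p.2 * ‖z‖ := by
      rw [dist_eq_norm]
      simp [norm_smul, abs_of_pos hp2']
    rw [Real.dist_eq, hdist] at hd
    have : |g z p| = |φ (p.1 + p.2 • z) - φ p.1| / p.2 := by
      rw [hgdef]; simp [abs_div, abs_of_pos hp2']
    rw [this, div_le_iff₀ hp2']
    calc |φ (p.1 + p.2 • z) - φ p.1| ≤ (K:ℝ) * (p.2 * ‖z‖) := hd
      _ = (K:ℝ) * ‖z‖ * p.2 := by ring
  have hb_le : ∀ z, IsBoundedUnder (· ≤ ·) F (g z) := fun z =>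
    ⟨(K:ℝ) * ‖z‖, (hbound z).mono fun p hp => (abs_le.1 hp).2⟩
  have hb_ge : ∀ z, IsBoundedUnder (· ≥ ·) F (g z) := fun z =>
    ⟨-((K:ℝ) * ‖z‖), (hbound z).mono fun p hp => (abs_le.1 hp).1⟩
  have hcob : ∀ z, IsCoboundedUnder (· ≤ ·) F (g z) := fun z =>
    (hb_ge z).isCoboundedUnder_le
  -- upper bound on N
  have hN_le : ∀ z, N z ≤ (K:ℝ) * ‖z‖ := by
    intro z
    show limsup (g z) F ≤ (K:ℝ) * ‖z‖
    exact limsup_le_of_le (hcob z) ((hbound z).mono fun p hp => (abs_le.1 hp).2)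
  -- N 0 = 0
  have hN_zero : N 0 = 0 := by
    show limsup (g 0) F = 0
    have : g 0 = fun _ => (0:ℝ) := by
      funext p; rw [hgdef]; simp
    rw [this]
    exact limsup_const 0
  -- subadditivity
  have hN_add : ∀ z₁ z₂, N (z₁ + z₂) ≤ N z₁ + N z₂ := by
    intro z₁ z₂
    set T : Y × ℝ → Y × ℝ := fun p => (p.1 + p.2 • z₂, p.2) with hT
    have hTt : Tendsto T F F := by
      rw [hFdef]
      exact Tendsto.prodMk (htend z₂) tendsto_snd
    have heq : g (z₁ + z₂) = fun p => g z₁ (T p) + g z₂ p := by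
      funext p
      rw [hgdef, hT]
      simp only [smul_add]
      rw [← add_div]
      congr 1
      abel_nf
    have hb1le : IsBoundedUnder (· ≤ ·) F fun p => g z₁ (T p) :=
      ⟨(K:ℝ) * ‖z₁‖, (hTt.eventually (hbound z₁)).mono fun p hp => (abs_le.1 hp).2⟩
    have hb1ge : IsBoundedUnder (· ≥ ·) F fun p => g z₁ (T p) :=
      ⟨-((K:ℝ) * ‖z₁‖), (hTt.eventually (hbound z₁)).mono fun p hp => (abs_le.1 hp).1⟩
    have step1 : limsup (g (z₁ + z₂)) F ≤
        limsup (fun p => g z₁ (T p)) F + limsup (g z₂) F := by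
      rw [heq]
      exact limsup_add_le hb1ge hb1le (hcob z₂) (hb_le z₂)
    have step2 : limsup (fun p => g z₁ (T p)) F ≤ limsup (g z₁) F := by
      have : limsup (fun p => g z₁ (T p)) F = limsup (g z₁) (map T F) :=
        limsup_comp (g z₁) T F
      rw [this]
      refine limsup_le_limsup_of_le hTt ?_ (hb_le z₁)
      haveI : (map T F).NeBot := Filter.map_neBot
      exact IsBoundedUnder.isCoboundedUnder_le
        ⟨-((K:ℝ) * ‖z₁‖), by
          rw [eventually_map] at *
          exact (hTt.eventually (hbound z₁)).mono fun p hp => (abs_le.1 hp).1⟩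
    calc N (z₁ + z₂) = limsup (g (z₁ + z₂)) F := hNdef _
      _ ≤ limsup (fun p => g z₁ (T p)) F + limsup (g z₂) F := step1
      _ ≤ limsup (g z₁) F + limsup (g z₂) F := by linarith
      _ = N z₁ + N z₂ := rfl
  -- positive homogeneity
  have hN_hom : ∀ c : ℝ, 0 < c → ∀ z, N (c • z) = c * N z := by
    intro c hc z
    have key : ∀ (a : ℝ), 0 < a →
        Tendsto (fun p : Y × ℝ => (p.1, a * p.2)) F F := by
      intro a ha
      rw [hFdef]
      refine Tendsto.prodMk tendsto_fst ?_
      refine tendsto_nhdsWithin_of_tendsto_nhds_of_eventually_within _ ?_ ?_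
      · have : Tendsto (fun t : ℝ => a * t) (nhds 0) (nhds (a * 0)) :=
          (continuous_mul_left a).tendsto 0
        rw [mul_zero] at this
        exact (this.comp (tendsto_snd.mono_right nhdsWithin_le_nhds))
      · exact hsnd.mono fun p hp => mul_pos ha hp
    set S : Y × ℝ → Y × ℝ := fun p => (p.1, c * p.2) with hS
    have hmap : map S F = F := by
      apply le_antisymm (key c hc)
      have h2 : Tendsto (fun p : Y × ℝ => (p.1, c⁻¹ * p.2)) F F := key c⁻¹ (by positivity)
      have : F = map S (map (fun p : Y × ℝ => (p.1, c⁻¹ * p.2)) F) := by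
        rw [map_map]
        have : S ∘ (fun p : Y × ℝ => (p.1, c⁻¹ * p.2)) = id := by
          funext p
          simp [hS, mul_inv_cancel_left₀ hc.ne']
        rw [this, map_id]
      calc F = map S (map (fun p : Y × ℝ => (p.1, c⁻¹ * p.2)) F) := this
        _ ≤ map S F := map_mono h2
    have heq : g (c • z) = fun p => c * g z (S p) := by
      funext p
      rw [hgdef, hS]
      simp only
      rw [smul_smul, mul_comm p.2 c, ← smul_smul]
      rcases eq_or_ne p.2 0 with h0 | h0
      · simp [h0]
      · rw [← mul_div_assoc, mul_div_mul_left _ _ hc.ne']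
    have hbS_le : IsBoundedUnder (· ≤ ·) F fun p => g z (S p) :=
      ⟨(K:ℝ) * ‖z‖, ((key c hc).eventually (hbound z)).mono fun p hp => (abs_le.1 hp).2⟩
    have hbS_ge : IsBoundedUnder (· ≥ ·) F fun p => g z (S p) :=
      ⟨-((K:ℝ) * ‖z‖), ((key c hc).eventually (hbound z)).mono fun p hp => (abs_le.1 hp).1⟩
    have hiso := (OrderIso.mulLeft₀ c hc).limsup_apply (f := F)
      (u := fun p => g z (S p)) hbS_le hbS_ge.isCoboundedUnder_le
      (by
        refine ⟨c * ((K:ℝ) * ‖z‖), ((key c hc).eventually (hbound z)).mono fun p hp => ?_⟩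
        simp only [OrderIso.mulLeft₀_apply]
        exact mul_le_mul_of_nonneg_left (abs_le.1 hp).2 hc.le)
      (IsBoundedUnder.isCoboundedUnder_le
        ⟨c * (-((K:ℝ) * ‖z‖)), ((key c hc).eventually (hbound z)).mono fun p hp => by
          simp only [OrderIso.mulLeft₀_apply]
          exact mul_le_mul_of_nonneg_left (abs_le.1 hp).1 hc.le⟩)
    simp only [OrderIso.mulLeft₀_apply] at hiso
    have hcomp : limsup (fun p => g z (S p)) F = limsup (g z) F := by
      have : limsup (fun p => g z (S p)) F = limsup (g z) (map S F) := limsup_comp (g z) S F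
      rw [this, hmap]
    calc N (c • z) = limsup (g (c • z)) F := hNdef _
      _ = limsup (fun p => c * g z (S p)) F := by rw [heq]
      _ = c * limsup (fun p => g z (S p)) F := hiso.symm
      _ = c * N z := by rw [hcomp]; rfl
  -- a consequence: -N (-z) ≤ N z type facts
  have hN_neg : ∀ z, 0 ≤ N z + N (-z) := by
    intro z
    have := hN_add z (-z)
    rw [add_neg_cancel, hN_zero] at this
    linarith
  -- Hahn–Banach
  have main : ∃ gl : Y →ₗ[ℝ] ℝ, (gl z₀ = N z₀) ∧ ∀ x, gl x ≤ N x := by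
    rcases eq_or_ne z₀ 0 with rfl | hz₀
    · -- trivial domain
      obtain ⟨gl, _, hle⟩ := exists_extension_of_le_sublinear
        (⟨⊥, 0⟩ : Y →ₗ.[ℝ] ℝ) N hN_hom hN_add
        (by
          rintro ⟨x, hx⟩
          obtain rfl : x = 0 := (Submodule.mem_bot ℝ).1 hx
          simp [hN_zero])
      exact ⟨gl, by simpa [hN_zero] using (map_zero gl), hle⟩
    · set f := LinearPMap.mkSpanSingleton (K := ℝ) (σ := RingHom.id ℝ) z₀ (N z₀) hz₀ with hf
      have hdom : ∀ v : f.domain, f v ≤ N v := by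
        rintro ⟨v, hv⟩
        have hv' : v ∈ Submodule.span ℝ ({z₀} : Set Y) := hv
        obtain ⟨t, rfl⟩ := Submodule.mem_span_singleton.1 hv'
        have happ : f ⟨t • z₀, hv⟩ = t • N z₀ :=
          LinearPMap.mkSpanSingleton'_apply _ _ _ t _
        rw [happ]
        rcases lt_trichotomy t 0 with ht | rfl | ht
        · have : N (t • z₀) = (-t) * N (-z₀) := by
            have : t • z₀ = (-t) • (-z₀) := by simp
            rw [this, hN_hom (-t) (by linarith) (-z₀)]
          rw [this]
          have h0 := hN_neg z₀
          have : t • N z₀ = t * N z₀ := rfl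
          rw [this]
          nlinarith
        · simp [hN_zero]
        · rw [hN_hom t ht z₀]
          exact le_of_eq rfl
      obtain ⟨gl, hext, hle⟩ := exists_extension_of_le_sublinear f N hN_hom hN_add hdom
      refine ⟨gl, ?_, hle⟩
      have hmem : z₀ ∈ f.domain := Submodule.mem_span_singleton_self z₀
      have h1 : gl z₀ = f ⟨z₀, hmem⟩ := hext ⟨z₀, hmem⟩
      have h2 : f ⟨z₀, hmem⟩ = N z₀ := LinearPMap.mkSpanSingleton_apply ℝ ℝ hz₀ (N z₀)
      rw [h1, h2]
  obtain ⟨gl, hglz₀, hgle⟩ := main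
  have hKnn : (0:ℝ) ≤ (K:ℝ) := K.coe_nonneg
  have hbnd : ∀ x, ‖gl x‖ ≤ (K:ℝ) * ‖x‖ := by
    intro x
    rw [Real.norm_eq_abs, abs_le]
    constructor
    · have := (hgle (-x)).trans (hN_le (-x))
      rw [map_neg, norm_neg] at this
      linarith
    · exact (hgle x).trans (hN_le x)
  refine ⟨gl.mkContinuous (K:ℝ) hbnd, fun z => ?_, hglz₀⟩
  exact hgle z

end Aux

/-- Condition H(J)(c) is equivalent to the relaxed-monotonicity condition
for the partial Clarke subdifferential `∂₂J`. -/
theorem HJc_iff_relaxed_monotonicity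
    {X : Type*} [NormedAddCommGroup X] [NormedSpace ℝ X] [CompleteSpace X]
    (J : X → X → ℝ)
    (hJa : ∀ w : X, LocallyLipschitz (J w))
    (mJ1 mJ2 : ℝ) (hmJ1 : 0 ≤ mJ1) (hmJ2 : 0 ≤ mJ2) :
    (∀ w₁ w₂ v₁ v₂ : X,
      clarkeDeriv (J w₁) v₁ (v₂ - v₁) + clarkeDeriv (J w₂) v₂ (v₁ - v₂) ≤
        mJ1 * ‖v₁ - v₂‖ ^ 2 + mJ2 * ‖w₁ - w₂‖ * ‖v₁ - v₂‖) ↔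
    (∀ w₁ w₂ v₁ v₂ : X, ∀ ξ₁ ∈ clarkeSubdiff (J w₁) v₁, ∀ ξ₂ ∈ clarkeSubdiff (J w₂) v₂,
      -(mJ1 * ‖v₁ - v₂‖ ^ 2) - mJ2 * ‖w₁ - w₂‖ * ‖v₁ - v₂‖ ≤ (ξ₁ - ξ₂) (v₁ - v₂)) := by
  constructor
  · intro h w₁ w₂ v₁ v₂ ξ₁ hξ₁ ξ₂ hξ₂
    have a1 : ξ₁ (v₂ - v₁) ≤ clarkeDeriv (J w₁) v₁ (v₂ - v₁) := hξ₁ (v₂ - v₁)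
    have a2 : ξ₂ (v₁ - v₂) ≤ clarkeDeriv (J w₂) v₂ (v₁ - v₂) := hξ₂ (v₁ - v₂)
    have hh := h w₁ w₂ v₁ v₂
    have e1 : ξ₁ (v₂ - v₁) = -ξ₁ (v₁ - v₂) := by
      rw [show v₂ - v₁ = -(v₁ - v₂) by abel, map_neg]
    rw [ContinuousLinearMap.sub_apply]
    rw [e1] at a1
    linarith
  · intro h w₁ w₂ v₁ v₂
    obtain ⟨ξ₁, hξ₁, he₁⟩ := exists_clarke_subgradient (J w₁) (hJa w₁) v₁ (v₂ - v₁)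
    obtain ⟨ξ₂, hξ₂, he₂⟩ := exists_clarke_subgradient (J w₂) (hJa w₂) v₂ (v₁ - v₂)
    have hh := h w₁ w₂ v₁ v₂ ξ₁ hξ₁ ξ₂ hξ₂
    rw [ContinuousLinearMap.sub_apply] at hh
    have e1 : ξ₁ (v₂ - v₁) = -ξ₁ (v₁ - v₂) := by
      rw [show v₂ - v₁ = -(v₁ - v₂) by abel, map_neg]
    rw [← he₁, ← he₂, e1]
    linarith
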